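/- For each integer p ≥ 2 there is a unique real number ξ_p > 1 satisfying (2ξ_p − 1)·(ξ_p − 1)^{p−1} = ξ_p^{p}, and as p → ∞ one has ξ_p = (p − 1/2)/ln 2 + 1/2 + o(1); that is, ξ_p − ((p − 1/2)/ln 2 + 1/2) tends to 0 as p tends to infinity. -/

import Mathlib

open Real Filter

noncomputable def Phi (p : ℕ) (x : ℝ) : ℝ :=
  Real.log (2 - 1/x) + ((p:ℝ) - 1) * Real.log (1 - 1/x)


lemma log1 {s : ℝ} (h0 : 0 < s) (h1 : s < 1) :
    -s - s^2/(1-s) ≤ Real.log (1-s) := by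
  have h := Real.abs_log_sub_add_sum_range_le (by rw [abs_of_pos h0]; exact h1) 1
  simp [Finset.sum_range_one, abs_of_pos h0] at h
  have := abs_le.1 h
  nlinarith [this.1, this.2]

lemma log2lb {s : ℝ} (h0 : 0 < s) (h1 : s < 1) :
    -s - s^2/2 - s^3/(1-s) ≤ Real.log (1-s) := by
  have h := Real.abs_log_sub_add_sum_range_le (by rw [abs_of_pos h0]; exact h1) 2
  rw [abs_of_pos h0] at h
  simp [Finset.sum_range_succ] at h
  have := abs_le.1 h
  nlinarith [this.1, this.2]

lemma log2ub {s : ℝ} (h0 : 0 < s) (h1 : s < 1) :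
    Real.log (1-s) ≤ -s - s^2/2 + s^3/(1-s) := by
  have h := Real.abs_log_sub_add_sum_range_le (by rw [abs_of_pos h0]; exact h1) 2
  rw [abs_of_pos h0] at h
  simp [Finset.sum_range_succ] at h
  have := abs_le.1 h
  nlinarith [this.1, this.2]

lemma phi_lb {n x : ℝ} (hn : 0 ≤ n) (hx : 2 ≤ x) :
    Real.log 2 - 1/(2*x) - (1/(2*x))^2/(1-1/(2*x)) - n*(1/x) - n*((1/x)^2/2)
      - n*((1/x)^3/(1-1/x))
      ≤ Real.log (2 - 1/x) + n * Real.log (1 - 1/x) := by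
  have hx0 : 0 < x := by linarith
  have hs1 : 0 < 1/(2*x) := by positivity
  have hs1' : 1/(2*x) < 1 := by
    rw [div_lt_one (by linarith)]; linarith
  have hs2 : 0 < 1/x := by positivity
  have hs2' : 1/x < 1 := by rw [div_lt_one hx0]; linarith
  have e : 2 - 1/x = 2 * (1 - 1/(2*x)) := by field_simp
  rw [e, Real.log_mul two_ne_zero (by linarith)]
  have B1 := log1 hs1 hs1'
  have B2 := mul_le_mul_of_nonneg_left (log2lb hs2 hs2') hn
  have h3 : n * (-(1/x) - (1/x)^2/2 - (1/x)^3/(1-1/x))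
      = -(n*(1/x)) - n*((1/x)^2/2) - n*((1/x)^3/(1-1/x)) := by ring
  rw [h3] at B2
  linarith

lemma phi_ub {n x : ℝ} (hn : 0 ≤ n) (hx : 2 ≤ x) :
    Real.log (2 - 1/x) + n * Real.log (1 - 1/x)
      ≤ Real.log 2 - 1/(2*x) - n*(1/x) - n*((1/x)^2/2) + n*((1/x)^3/(1-1/x)) := by
  have hx0 : 0 < x := by linarith
  have hs1 : 0 < 1/(2*x) := by positivity
  have hs1' : 1/(2*x) < 1 := by
    rw [div_lt_one (by linarith)]; linarith
  have hs2 : 0 < 1/x := by positivity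
  have hs2' : 1/x < 1 := by rw [div_lt_one hx0]; linarith
  have e : 2 - 1/x = 2 * (1 - 1/(2*x)) := by field_simp
  rw [e, Real.log_mul two_ne_zero (by linarith)]
  have B1 : Real.log (1 - 1/(2*x)) ≤ -(1/(2*x)) := by
    have := Real.log_le_sub_one_of_pos (by linarith : (0:ℝ) < 1 - 1/(2*x))
    linarith
  have B2 := mul_le_mul_of_nonneg_left (log2ub hs2 hs2') hn
  have h3 : n * (-(1/x) - (1/x)^2/2 + (1/x)^3/(1-1/x))
      = -(n*(1/x)) - n*((1/x)^2/2) + n*((1/x)^3/(1-1/x)) := by ring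
  rw [h3] at B2
  linarith



lemma root_iff (p : ℕ) (hp : 2 ≤ p) {x : ℝ} (hx : 1 < x) :
    (2*x - 1) * (x - 1)^(p-1) = x^p ↔ Phi p x = 0 := by
  have hx0 : 0 < x := by linarith
  have hx1 : 0 < x - 1 := by linarith
  have h2 : 0 < 2*x - 1 := by linarith
  have hcast : ((p - 1 : ℕ) : ℝ) = (p:ℝ) - 1 := by
    have : 1 ≤ p := by omega
    push_cast [Nat.cast_sub this]; ring
  have key : Phi p x = Real.log (2*x-1) + ((p:ℝ)-1) * Real.log (x-1) - (p:ℝ) * Real.log x := by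
    unfold Phi
    have e1 : 2 - 1/x = (2*x-1)/x := by field_simp
    have e2 : 1 - 1/x = (x-1)/x := by field_simp
    rw [e1, e2, Real.log_div (by positivity) (by positivity),
      Real.log_div (by positivity) (by positivity)]
    ring
  constructor
  · intro h
    have := congrArg Real.log h
    rw [Real.log_mul (by positivity) (by positivity), Real.log_pow, Real.log_pow, hcast] at this
    rw [key]; linarith [this]
  · intro h
    rw [key] at h
    have hlog : Real.log ((2*x-1) * (x-1)^(p-1)) = Real.log (x^p) := by
      rw [Real.log_mul (by positivity) (by positivity), Real.log_pow, Real.log_pow, hcast]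
      linarith
    have h1 : (0:ℝ) < (2*x-1) * (x-1)^(p-1) := by positivity
    have h2' : (0:ℝ) < x^p := by positivity
    exact Real.log_injOn_pos (Set.mem_Ioi.2 h1) (Set.mem_Ioi.2 h2') hlog

lemma phi_mono (p : ℕ) (hp : 2 ≤ p) : StrictMonoOn (Phi p) (Set.Ioi 1) := by
  intro a ha b hb hab
  simp only [Set.mem_Ioi] at ha hb
  have ha0 : 0 < a := by linarith
  have hb0 : 0 < b := by linarith
  have hinv : 1/b < 1/a := by
    apply one_div_lt_one_div_of_lt ha0 hab
  have hia : 1/a < 1 := by rw [div_lt_one ha0]; linarith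
  have h1 : Real.log (2 - 1/a) < Real.log (2 - 1/b) := by
    apply Real.log_lt_log (by linarith) (by linarith)
  have h2 : Real.log (1 - 1/a) < Real.log (1 - 1/b) := by
    apply Real.log_lt_log
    · linarith
    · linarith
  have hpc : (0:ℝ) < (p:ℝ) - 1 := by
    have : (2:ℝ) ≤ (p:ℝ) := by exact_mod_cast hp
    linarith
  unfold Phi
  nlinarith [mul_lt_mul_of_pos_left h2 hpc]



lemma phi_cont (p : ℕ) : ContinuousOn (Phi p) (Set.Ici (4/3 : ℝ)) := by
  have hinv : ContinuousOn (fun x : ℝ => 1/x) (Set.Ici (4/3 : ℝ)) := by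
    apply ContinuousOn.div continuousOn_const continuousOn_id
    intro x hx; simp only [Set.mem_Ici] at hx; simp only [id]; intro h; rw [h] at hx; norm_num at hx
  have hbd : ∀ x ∈ Set.Ici (4/3:ℝ), 1/x ≤ 3/4 := by
    intro x hx
    simp only [Set.mem_Ici] at hx
    rw [div_le_div_iff₀ (by linarith) (by norm_num)]; linarith
  unfold Phi
  apply ContinuousOn.add
  · apply ContinuousOn.log (continuousOn_const.sub hinv)
    intro x hx; have := hbd x hx; intro h; simp only [Pi.sub_apply] at h; nlinarith
  · apply ContinuousOn.mul continuousOn_const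
    apply ContinuousOn.log (continuousOn_const.sub hinv)
    intro x hx; have := hbd x hx; intro h; simp only [Pi.sub_apply] at h; nlinarith

lemma exp_half_lt : Real.exp (1/2 : ℝ) < 1.8 := by
  nlinarith [Real.exp_one_lt_d9, Real.exp_pos (1/2:ℝ), sq_nonneg (Real.exp (1/2:ℝ)),
    Real.exp_add (1/2:ℝ) (1/2:ℝ), (by norm_num : (1/2:ℝ)+(1/2:ℝ) = 1)]

lemma phi_exists (p : ℕ) (hp : 2 ≤ p) : ∃ x : ℝ, 1 < x ∧ Phi p x = 0 := by
  have hp1 : (2:ℝ) ≤ (p:ℝ) := by exact_mod_cast hp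
  have hlow : Phi p (4/3) < 0 := by
    have e1 : (2 - 1/(4/3:ℝ)) = 5/4 := by norm_num
    have e2 : (1 - 1/(4/3:ℝ)) = 1/4 := by norm_num
    unfold Phi
    rw [e1, e2]
    have h14 : Real.log (1/4:ℝ) < 0 := Real.log_neg (by norm_num) (by norm_num)
    have h54 : Real.log (5/4:ℝ) ≤ 5/4 - 1 := Real.log_le_sub_one_of_pos (by norm_num)
    have hmul : ((p:ℝ)-1) * Real.log (1/4:ℝ) ≤ 1 * Real.log (1/4:ℝ) := by
      apply mul_le_mul_of_nonpos_right (by linarith) (le_of_lt h14)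
    have h14' : Real.log (1/4:ℝ) = - Real.log 4 := by
      rw [one_div, Real.log_inv]
    have h4 : Real.log 4 = 2 * Real.log 2 := by
      rw [show (4:ℝ) = 2^2 by norm_num, Real.log_pow]; push_cast; ring
    have hl2 : 0.6931 < Real.log 2 := by
      have := Real.log_two_gt_d9; linarith
    rw [h14', h4] at hmul h14
    nlinarith
  set b : ℝ := 2*(p:ℝ)+1 with hb
  have hbpos : (5:ℝ) ≤ b := by rw [hb]; linarith
  have hhigh : 0 < Phi p b := by
    have hb1 : (1:ℝ) < b := by linarith
    have h1b : 1/b ≤ 1/5 := by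
      apply one_div_le_one_div_of_le <;> linarith
    have h1bpos : 0 < 1/b := by positivity
    -- log(2 - 1/b) > 1/2
    have hA : 1/2 < Real.log (2 - 1/b) := by
      have h95 : (9/5:ℝ) ≤ 2 - 1/b := by linarith
      have : Real.exp (1/2:ℝ) < 2 - 1/b := by
        have h18 : (1.8:ℝ) = 9/5 := by norm_num
        have := exp_half_lt; rw [h18] at this; linarith
      calc (1/2:ℝ) = Real.log (Real.exp (1/2)) := (Real.log_exp _).symm
        _ < Real.log (2 - 1/b) := Real.log_lt_log (Real.exp_pos _) this
    -- (p-1) * log(1 - 1/b) ≥ -(p-1)/(b-1) = -(p-1)/(2p) > -1/2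
    have hB : -(1/2:ℝ) < ((p:ℝ)-1) * Real.log (1 - 1/b) := by
      have hbm1 : b - 1 = 2*(p:ℝ) := by rw [hb]; ring
      have hinv : 1 - 1/b = (1 + 1/(b-1))⁻¹ := by
        rw [hbm1]
        field_simp
        ring
      have hlog : Real.log (1 - 1/b) = - Real.log (1 + 1/(b-1)) := by
        rw [hinv, Real.log_inv]
      have hub : Real.log (1 + 1/(b-1)) ≤ 1/(b-1) := by
        have := Real.log_le_sub_one_of_pos (show (0:ℝ) < 1 + 1/(b-1) by
          rw [hbm1]; positivity)
        linarith
      have h2p : 1/(b-1) = 1/(2*(p:ℝ)) := by rw [hbm1]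
      have hlt : ((p:ℝ)-1) * (1/(2*(p:ℝ))) < 1/2 := by
        rw [mul_one_div, div_lt_div_iff₀ (by positivity) (by norm_num)]
        nlinarith
      have hnn : (0:ℝ) ≤ (p:ℝ) - 1 := by linarith
      have := mul_le_mul_of_nonneg_left hub hnn
      rw [hlog, h2p] at *
      nlinarith
    unfold Phi; linarith
  have hab : (4/3:ℝ) ≤ b := by linarith
  have hcont : ContinuousOn (Phi p) (Set.Icc (4/3) b) := by
    apply (phi_cont p).mono
    intro x hx; exact hx.1
  have := intermediate_value_Ioo hab hcont
  have h0 : (0:ℝ) ∈ Set.Ioo (Phi p (4/3)) (Phi p b) := ⟨hlow, hhigh⟩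
  obtain ⟨x, hx, hfx⟩ := this h0
  exact ⟨x, by linarith [hx.1], hfx⟩


lemma tendsto_u (a : ℝ) : Tendsto (fun p:ℕ => (p:ℝ)+a) atTop atTop :=
  tendsto_atTop_add_const_right _ a tendsto_natCast_atTop_atTop

lemma tendsto_ratio (a c : ℝ) :
    Tendsto (fun p:ℕ => ((p:ℝ)+c)/((p:ℝ)+a)) atTop (nhds 1) := by
  have h0 : Tendsto (fun p:ℕ => (c-a)/((p:ℝ)+a)) atTop (nhds 0) :=
    Tendsto.div_atTop tendsto_const_nhds (tendsto_u a)
  have h1 : Tendsto (fun p:ℕ => 1 + (c-a)/((p:ℝ)+a)) atTop (nhds 1) := by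
    simpa using (tendsto_const_nhds : Tendsto (fun _:ℕ => (1:ℝ)) atTop (nhds 1)).add h0
  apply Tendsto.congr' _ h1
  filter_upwards [(tendsto_u a).eventually_gt_atTop 0] with p hp
  field_simp
  ring



lemma identA (L a q : ℝ) (hL : 0 < L) (hv : 2*L+2 ≤ q+a) :
    q * (L - 1/(2*((q+a)/L)) - (1/(2*((q+a)/L)))^2/(1-1/(2*((q+a)/L)))
      - (q-1)*(1/((q+a)/L)) - (q-1)*((1/((q+a)/L))^2/2)
      - (q-1)*((1/((q+a)/L))^3/(1-1/((q+a)/L))))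
    = L*(a+1)*(q/(q+a)) - (L/2)*(q/(q+a))
      - (L^2/4)*(q/(q+a))*(1/(q+a))/(1 - L/(2*(q+a)))
      - (L^2/2)*(q/(q+a))*((q-1)/(q+a))
      - L^3*(q/(q+a))*((q-1)/(q+a))*(1/(q+a))/(1 - L/(q+a)) := by
  have hv0 : 0 < q + a := by linarith
  have hL0 : L ≠ 0 := ne_of_gt hL
  have hv0' : q + a ≠ 0 := ne_of_gt hv0
  have e2 : 2*((q+a)/L) = (2*(q+a))/L := by ring
  rw [e2, one_div_div, one_div_div]
  have h1 : 1 - L/(2*(q+a)) ≠ 0 := by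
    have : L/(2*(q+a)) < 1 := by
      rw [div_lt_one (by linarith)]; linarith
    linarith
  have h2 : 1 - L/(q+a) ≠ 0 := by
    have : L/(q+a) < 1 := by
      rw [div_lt_one hv0]; linarith
    linarith
  field_simp
  ring


lemma keyA {ε : ℝ} (hε : 0 < ε) :
    ∀ᶠ p : ℕ in atTop, 0 < Phi p (((p:ℝ) - 1/2)/Real.log 2 + 1/2 + ε) := by
  have hL : 0 < Real.log 2 := Real.log_pos one_lt_two
  set L := Real.log 2 with hLdef
  set a : ℝ := -1/2 + (1/2+ε)*L with ha
  have hueq : ∀ p:ℕ, ((p:ℝ) - 1/2)/L + 1/2 + ε = ((p:ℝ)+a)/L := by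
    intro p; rw [ha]; field_simp; ring
  have hua : Tendsto (fun p:ℕ => (p:ℝ)+a) atTop atTop := tendsto_u a
  have hw : Tendsto (fun p:ℕ => 1/((p:ℝ)+a)) atTop (nhds 0) :=
    Tendsto.div_atTop tendsto_const_nhds hua
  have hr : Tendsto (fun p:ℕ => (p:ℝ)/((p:ℝ)+a)) atTop (nhds 1) := by
    have := tendsto_ratio a 0
    simpa using this
  have hr' : Tendsto (fun p:ℕ => ((p:ℝ)-1)/((p:ℝ)+a)) atTop (nhds 1) := by
    have := tendsto_ratio a (-1)
    simpa [sub_eq_add_neg] using this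
  have hd1 : Tendsto (fun p:ℕ => 1 - L/(2*((p:ℝ)+a))) atTop (nhds 1) := by
    have h2u : Tendsto (fun p:ℕ => 2*((p:ℝ)+a)) atTop atTop :=
      hua.const_mul_atTop two_pos
    have h0 : Tendsto (fun p:ℕ => L/(2*((p:ℝ)+a))) atTop (nhds 0) :=
      Tendsto.div_atTop tendsto_const_nhds h2u
    simpa using (tendsto_const_nhds : Tendsto (fun _:ℕ => (1:ℝ)) atTop (nhds 1)).sub h0
  have hd2 : Tendsto (fun p:ℕ => 1 - L/((p:ℝ)+a)) atTop (nhds 1) := by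
    have h0 : Tendsto (fun p:ℕ => L/((p:ℝ)+a)) atTop (nhds 0) :=
      Tendsto.div_atTop tendsto_const_nhds hua
    simpa using (tendsto_const_nhds : Tendsto (fun _:ℕ => (1:ℝ)) atTop (nhds 1)).sub h0
  -- limit of H
  have t1 : Tendsto (fun p:ℕ => L*(a+1)*((p:ℝ)/((p:ℝ)+a))) atTop (nhds (L*(a+1)*1)) :=
    tendsto_const_nhds.mul hr
  have t2 : Tendsto (fun p:ℕ => (L/2)*((p:ℝ)/((p:ℝ)+a))) atTop (nhds ((L/2)*1)) :=
    tendsto_const_nhds.mul hr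
  have t3 : Tendsto (fun p:ℕ => (L^2/4)*((p:ℝ)/((p:ℝ)+a))*(1/((p:ℝ)+a))/(1 - L/(2*((p:ℝ)+a))))
      atTop (nhds ((L^2/4)*1*0/1)) :=
    ((tendsto_const_nhds.mul hr).mul hw).div hd1 one_ne_zero
  have t4 : Tendsto (fun p:ℕ => (L^2/2)*((p:ℝ)/((p:ℝ)+a))*(((p:ℝ)-1)/((p:ℝ)+a)))
      atTop (nhds ((L^2/2)*1*1)) :=
    (tendsto_const_nhds.mul hr).mul hr'
  have t5 : Tendsto (fun p:ℕ =>
      L^3*((p:ℝ)/((p:ℝ)+a))*(((p:ℝ)-1)/((p:ℝ)+a))*(1/((p:ℝ)+a))/(1 - L/((p:ℝ)+a)))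
      atTop (nhds (L^3*1*1*0/1)) :=
    (((tendsto_const_nhds.mul hr).mul hr').mul hw).div hd2 one_ne_zero
  have hH := (((t1.sub t2).sub t3).sub t4).sub t5
  have hlim : L*(a+1)*1 - (L/2)*1 - (L^2/4)*1*0/1 - (L^2/2)*1*1 - L^3*1*1*0/1 = ε*L^2 := by
    rw [ha]; ring
  rw [hlim] at hH
  -- F = H eventually
  have hFH : (fun p:ℕ => L*(a+1)*((p:ℝ)/((p:ℝ)+a)) - (L/2)*((p:ℝ)/((p:ℝ)+a))
        - (L^2/4)*((p:ℝ)/((p:ℝ)+a))*(1/((p:ℝ)+a))/(1 - L/(2*((p:ℝ)+a)))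
        - (L^2/2)*((p:ℝ)/((p:ℝ)+a))*(((p:ℝ)-1)/((p:ℝ)+a))
        - L^3*((p:ℝ)/((p:ℝ)+a))*(((p:ℝ)-1)/((p:ℝ)+a))*(1/((p:ℝ)+a))/(1 - L/((p:ℝ)+a)))
      =ᶠ[atTop] (fun p:ℕ =>
      (p:ℝ) * (L - 1/(2*(((p:ℝ)+a)/L)) - (1/(2*(((p:ℝ)+a)/L)))^2/(1-1/(2*(((p:ℝ)+a)/L)))
        - ((p:ℝ)-1)*(1/(((p:ℝ)+a)/L)) - ((p:ℝ)-1)*((1/(((p:ℝ)+a)/L))^2/2)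
        - ((p:ℝ)-1)*((1/(((p:ℝ)+a)/L))^3/(1-1/(((p:ℝ)+a)/L))))) := by
    filter_upwards [hua.eventually_ge_atTop (2*L+2)] with p hv
    exact (identA L a (p:ℝ) hL hv).symm
  have hF := Filter.Tendsto.congr' hFH hH
  have hpos : ∀ᶠ p:ℕ in atTop, (0:ℝ) <
      (p:ℝ) * (L - 1/(2*(((p:ℝ)+a)/L)) - (1/(2*(((p:ℝ)+a)/L)))^2/(1-1/(2*(((p:ℝ)+a)/L)))
        - ((p:ℝ)-1)*(1/(((p:ℝ)+a)/L)) - ((p:ℝ)-1)*((1/(((p:ℝ)+a)/L))^2/2)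
        - ((p:ℝ)-1)*((1/(((p:ℝ)+a)/L))^3/(1-1/(((p:ℝ)+a)/L)))) :=
    hF.eventually (eventually_gt_nhds (by positivity))
  filter_upwards [hpos, hua.eventually_ge_atTop (2*L+2), eventually_ge_atTop 2] with p h1 h2 hp2
  rw [hueq p]
  set q := (p:ℝ) with hq
  set x := (q+a)/L with hx
  have hp2' : (2:ℝ) ≤ q := by rw [hq]; exact_mod_cast hp2
  have hx2 : 2 ≤ x := by
    rw [hx, le_div_iff₀ hL]; linarith
  have hn : (0:ℝ) ≤ q - 1 := by linarith
  have hq0 : 0 < q := by linarith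
  have hbracket : 0 < L - 1/(2*x) - (1/(2*x))^2/(1-1/(2*x))
      - (q-1)*(1/x) - (q-1)*((1/x)^2/2) - (q-1)*((1/x)^3/(1-1/x)) := by
    by_contra hcon
    push_neg at hcon
    nlinarith [h1]
  have := phi_lb hn hx2
  unfold Phi
  rw [← hLdef] at this
  linarith



lemma identB (L a q : ℝ) (hL : 0 < L) (hv : 2*L+2 ≤ q+a) :
    q * (L - 1/(2*((q+a)/L))
      - (q-1)*(1/((q+a)/L)) - (q-1)*((1/((q+a)/L))^2/2)
      + (q-1)*((1/((q+a)/L))^3/(1-1/((q+a)/L))))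
    = L*(a+1)*(q/(q+a)) - (L/2)*(q/(q+a))
      - (L^2/2)*(q/(q+a))*((q-1)/(q+a))
      + L^3*(q/(q+a))*((q-1)/(q+a))*(1/(q+a))/(1 - L/(q+a)) := by
  have hv0 : 0 < q + a := by linarith
  have hL0 : L ≠ 0 := ne_of_gt hL
  have hv0' : q + a ≠ 0 := ne_of_gt hv0
  have e2 : 2*((q+a)/L) = (2*(q+a))/L := by ring
  rw [e2, one_div_div, one_div_div]
  have h2 : 1 - L/(q+a) ≠ 0 := by
    have : L/(q+a) < 1 := by
      rw [div_lt_one hv0]; linarith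
    linarith
  field_simp
  ring

lemma keyB {ε : ℝ} (hε : 0 < ε) :
    ∀ᶠ p : ℕ in atTop, Phi p (((p:ℝ) - 1/2)/Real.log 2 + 1/2 - ε) < 0 := by
  have hL : 0 < Real.log 2 := Real.log_pos one_lt_two
  set L := Real.log 2 with hLdef
  set a : ℝ := -1/2 + (1/2-ε)*L with ha
  have hueq : ∀ p:ℕ, ((p:ℝ) - 1/2)/L + 1/2 - ε = ((p:ℝ)+a)/L := by
    intro p; rw [ha]; field_simp; ring
  have hua : Tendsto (fun p:ℕ => (p:ℝ)+a) atTop atTop := tendsto_u a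
  have hw : Tendsto (fun p:ℕ => 1/((p:ℝ)+a)) atTop (nhds 0) :=
    Tendsto.div_atTop tendsto_const_nhds hua
  have hr : Tendsto (fun p:ℕ => (p:ℝ)/((p:ℝ)+a)) atTop (nhds 1) := by
    have := tendsto_ratio a 0
    simpa using this
  have hr' : Tendsto (fun p:ℕ => ((p:ℝ)-1)/((p:ℝ)+a)) atTop (nhds 1) := by
    have := tendsto_ratio a (-1)
    simpa [sub_eq_add_neg] using this
  have hd2 : Tendsto (fun p:ℕ => 1 - L/((p:ℝ)+a)) atTop (nhds 1) := by
    have h0 : Tendsto (fun p:ℕ => L/((p:ℝ)+a)) atTop (nhds 0) :=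
      Tendsto.div_atTop tendsto_const_nhds hua
    simpa using (tendsto_const_nhds : Tendsto (fun _:ℕ => (1:ℝ)) atTop (nhds 1)).sub h0
  have t1 : Tendsto (fun p:ℕ => L*(a+1)*((p:ℝ)/((p:ℝ)+a))) atTop (nhds (L*(a+1)*1)) :=
    tendsto_const_nhds.mul hr
  have t2 : Tendsto (fun p:ℕ => (L/2)*((p:ℝ)/((p:ℝ)+a))) atTop (nhds ((L/2)*1)) :=
    tendsto_const_nhds.mul hr
  have t4 : Tendsto (fun p:ℕ => (L^2/2)*((p:ℝ)/((p:ℝ)+a))*(((p:ℝ)-1)/((p:ℝ)+a)))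
      atTop (nhds ((L^2/2)*1*1)) :=
    (tendsto_const_nhds.mul hr).mul hr'
  have t5 : Tendsto (fun p:ℕ =>
      L^3*((p:ℝ)/((p:ℝ)+a))*(((p:ℝ)-1)/((p:ℝ)+a))*(1/((p:ℝ)+a))/(1 - L/((p:ℝ)+a)))
      atTop (nhds (L^3*1*1*0/1)) :=
    (((tendsto_const_nhds.mul hr).mul hr').mul hw).div hd2 one_ne_zero
  have hH := ((t1.sub t2).sub t4).add t5
  have hlim : L*(a+1)*1 - (L/2)*1 - (L^2/2)*1*1 + L^3*1*1*0/1 = -(ε*L^2) := by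
    rw [ha]; ring
  rw [hlim] at hH
  have hFH : (fun p:ℕ => L*(a+1)*((p:ℝ)/((p:ℝ)+a)) - (L/2)*((p:ℝ)/((p:ℝ)+a))
        - (L^2/2)*((p:ℝ)/((p:ℝ)+a))*(((p:ℝ)-1)/((p:ℝ)+a))
        + L^3*((p:ℝ)/((p:ℝ)+a))*(((p:ℝ)-1)/((p:ℝ)+a))*(1/((p:ℝ)+a))/(1 - L/((p:ℝ)+a)))
      =ᶠ[atTop] (fun p:ℕ =>
      (p:ℝ) * (L - 1/(2*(((p:ℝ)+a)/L))
        - ((p:ℝ)-1)*(1/(((p:ℝ)+a)/L)) - ((p:ℝ)-1)*((1/(((p:ℝ)+a)/L))^2/2)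
        + ((p:ℝ)-1)*((1/(((p:ℝ)+a)/L))^3/(1-1/(((p:ℝ)+a)/L))))) := by
    filter_upwards [hua.eventually_ge_atTop (2*L+2)] with p hv
    exact (identB L a (p:ℝ) hL hv).symm
  have hF := Filter.Tendsto.congr' hFH hH
  have hneg : ∀ᶠ p:ℕ in atTop,
      (p:ℝ) * (L - 1/(2*(((p:ℝ)+a)/L))
        - ((p:ℝ)-1)*(1/(((p:ℝ)+a)/L)) - ((p:ℝ)-1)*((1/(((p:ℝ)+a)/L))^2/2)
        + ((p:ℝ)-1)*((1/(((p:ℝ)+a)/L))^3/(1-1/(((p:ℝ)+a)/L)))) < 0 :=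
    hF.eventually (eventually_lt_nhds (by nlinarith [mul_pos hε (mul_pos hL hL)]))
  filter_upwards [hneg, hua.eventually_ge_atTop (2*L+2), eventually_ge_atTop 2] with p h1 h2 hp2
  rw [hueq p]
  set q := (p:ℝ) with hq
  set x := (q+a)/L with hx
  have hp2' : (2:ℝ) ≤ q := by rw [hq]; exact_mod_cast hp2
  have hx2 : 2 ≤ x := by
    rw [hx, le_div_iff₀ hL]; linarith
  have hn : (0:ℝ) ≤ q - 1 := by linarith
  have hq0 : 0 < q := by linarith
  have hbracket : L - 1/(2*x)
      - (q-1)*(1/x) - (q-1)*((1/x)^2/2) + (q-1)*((1/x)^3/(1-1/x)) < 0 := by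
    by_contra hcon
    push_neg at hcon
    nlinarith [h1]
  have := phi_ub hn hx2
  rw [← hLdef] at this
  unfold Phi
  linarith


/-- For each integer `p ≥ 2` there is a unique real `ξ_p > 1` with
`(2ξ_p − 1)(ξ_p − 1)^{p−1} = ξ_p^p`, and
`ξ_p = (p − 1/2)/ln 2 + 1/2 + o(1)` as `p → ∞`. -/
theorem stmt19 :
    (∀ p : ℕ, 2 ≤ p →
      ∃! ξ : ℝ, 1 < ξ ∧ (2 * ξ - 1) * (ξ - 1) ^ (p - 1) = ξ ^ p) ∧
    ∀ ξ : ℕ → ℝ,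
      (∀ p : ℕ, 2 ≤ p →
        1 < ξ p ∧ (2 * ξ p - 1) * (ξ p - 1) ^ (p - 1) = (ξ p) ^ p) →
      Filter.Tendsto
        (fun p : ℕ => ξ p - (((p : ℝ) - 1 / 2) / Real.log 2 + 1 / 2))
        Filter.atTop (nhds 0) := by
  have hL : 0 < Real.log 2 := Real.log_pos one_lt_two
  constructor
  · intro p hp
    obtain ⟨x, hx1, hx0⟩ := phi_exists p hp
    refine ⟨x, ⟨hx1, (root_iff p hp hx1).2 hx0⟩, ?_⟩
    rintro y ⟨hy1, hy0⟩
    have hy0' : Phi p y = 0 := (root_iff p hp hy1).1 hy0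
    exact (phi_mono p hp).injOn (Set.mem_Ioi.2 hy1) (Set.mem_Ioi.2 hx1)
      (by rw [hy0', hx0])
  · intro ξ h
    rw [Metric.tendsto_atTop]
    intro ε hε
    set a' : ℝ := -1/2 + (1/2-ε)*Real.log 2 with ha'
    have hueq' : ∀ p:ℕ, ((p:ℝ) - 1/2)/Real.log 2 + 1/2 - ε = ((p:ℝ)+a')/Real.log 2 := by
      intro p; rw [ha']; field_simp; ring
    have hev : ∀ᶠ p:ℕ in atTop,
        dist (ξ p - (((p:ℝ) - 1/2)/Real.log 2 + 1/2)) 0 < ε := by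
      filter_upwards [keyA hε, keyB hε, eventually_ge_atTop 2,
        (tendsto_u a').eventually_gt_atTop (Real.log 2)] with p h1 h2 hp2 h3
      set c : ℝ := ((p:ℝ) - 1/2)/Real.log 2 + 1/2 with hc
      have hgt1 : 1 < c - ε := by
        rw [hc, hueq' p, lt_div_iff₀ hL]; linarith
      obtain ⟨hξ1, hξeq⟩ := h p hp2
      have hΦξ : Phi p (ξ p) = 0 := (root_iff p hp2 hξ1).1 hξeq
      have hmono := phi_mono p hp2
      have hmemξ : ξ p ∈ Set.Ioi (1:ℝ) := Set.mem_Ioi.2 hξ1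
      have hmemp : c + ε ∈ Set.Ioi (1:ℝ) := Set.mem_Ioi.2 (by linarith)
      have hmemm : c - ε ∈ Set.Ioi (1:ℝ) := Set.mem_Ioi.2 hgt1
      have hup : ξ p < c + ε := by
        by_contra h'
        push_neg at h'
        rcases eq_or_lt_of_le h' with he | hlt
        · rw [← he] at hΦξ; rw [hc] at hΦξ; linarith
        · have := hmono hmemp hmemξ hlt
          rw [hΦξ, hc] at this; linarith
      have hdown : c - ε < ξ p := by
        by_contra h'
        push_neg at h'
        rcases eq_or_lt_of_le h' with he | hlt
        · rw [he] at hΦξ; rw [hc] at hΦξ; linarith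
        · have := hmono hmemξ hmemm hlt
          rw [hΦξ, hc] at this; linarith
      rw [Real.dist_eq, sub_zero, abs_lt]
      constructor <;> [linarith; linarith]
    exact eventually_atTop.1 hev
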